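/- Let ω = e^{2πi/3}, let g₁ = diag(1,ω,ω²) and let g₂ be the cyclic permutation matrix in GL(3,ℂ), generating the Heisenberg group Γ of order 27. If n ∈ GL(3,ℂ) satisfies n g₁ n⁻¹ = ω^k g₁ and n g₂ n⁻¹ = ω^l g₂ for some integers k, l, then n = z·g for some nonzero scalar z ∈ ℂ* and some g ∈ Γ; indeed one may take g = g₁^l g₂^{−k}. In other words, the kernel of the conjugation homomorphism χ: N → GL(2,ℤ/3) is exactly D·Γ, where D is the group of nonzero scalar matrices. -/

import Mathlib

noncomputable section
open Complex Matrix

/-- ω = e^{2πi/3}, a primitive cube root of unity. -/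
def ω : ℂ := Complex.exp (2 * Real.pi * Complex.I / 3)

lemma ω_ne_zero : ω ≠ 0 := Complex.exp_ne_zero _

/-- g₁ = diag(1, ω, ω²). -/
def g₁ : Matrix (Fin 3) (Fin 3) ℂ := Matrix.diagonal ![1, ω, ω ^ 2]

/-- g₂ : the cyclic permutation matrix, sending e₁ ↦ e₂ ↦ e₃ ↦ e₁. -/
def g₂ : Matrix (Fin 3) (Fin 3) ℂ := Matrix.of ![![0,0,1],![1,0,0],![0,1,0]]

lemma det_g₁ : g₁.det ≠ 0 := by
  rw [g₁, Matrix.det_diagonal, Fin.prod_univ_three]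
  simp only [Matrix.cons_val_zero, Matrix.cons_val_one, Matrix.head_cons,
    Matrix.cons_val_two, Matrix.tail_cons]
  exact by simpa using mul_ne_zero (mul_ne_zero one_ne_zero ω_ne_zero) (pow_ne_zero 2 ω_ne_zero)

lemma det_g₂ : g₂.det ≠ 0 := by
  rw [g₂, Matrix.det_fin_three]
  norm_num
  first
    | exact ⟨one_ne_zero, one_ne_zero⟩
    | simp [Matrix.vecCons, Fin.cons, Fin.cases, Fin.induction]

/-- g₁ as an element of GL(3,ℂ). -/
def G₁ : GL (Fin 3) ℂ := Matrix.GeneralLinearGroup.mkOfDetNeZero g₁ det_g₁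

/-- g₂ as an element of GL(3,ℂ). -/
def G₂ : GL (Fin 3) ℂ := Matrix.GeneralLinearGroup.mkOfDetNeZero g₂ det_g₂

/-- Γ = Δ₂₇ ⊆ GL(3,ℂ), the subgroup generated by g₁ and g₂. -/
def Γ : Subgroup (GL (Fin 3) ℂ) := Subgroup.closure {G₁, G₂}


-- basic facts about ω
lemma hprim : IsPrimitiveRoot ω 3 := by
  have h := Complex.isPrimitiveRoot_exp 3 (by norm_num)
  have : ω = Complex.exp (2 * Real.pi * Complex.I / (3:ℕ)) := by rw [ω]; norm_num
  rw [this]; exact h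
lemma ω_cube : ω ^ 3 = 1 := hprim.pow_eq_one
lemma ω_ne_one : ω ≠ 1 := hprim.ne_one (by norm_num)
lemma ω_sq_ne_one : ω ^ 2 ≠ 1 := hprim.pow_ne_one_of_pos_of_lt (by norm_num) (by norm_num)
lemma ω_sq_ne_ω : ω ^ 2 ≠ ω := by
  intro h
  apply ω_ne_one
  have h2 : ω * ω = ω * 1 := by rw [mul_one]; rw [← sq]; exact h
  exact mul_left_cancel₀ ω_ne_zero h2

-- scalar unit
def ωu : ℂˣ := Units.mk0 ω ω_ne_zero
def W : GL (Fin 3) ℂ := Units.map (Matrix.scalar (Fin 3)).toMonoidHom ωu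

lemma coe_G₁ : (G₁ : Matrix (Fin 3) (Fin 3) ℂ) = g₁ := rfl
lemma coe_G₂ : (G₂ : Matrix (Fin 3) (Fin 3) ℂ) = g₂ := rfl

lemma coe_W_zpow (j : ℤ) : ((W ^ j : GL (Fin 3) ℂ) : Matrix (Fin 3) (Fin 3) ℂ)
    = ω ^ j • (1 : Matrix (Fin 3) (Fin 3) ℂ) := by
  rw [W, ← map_zpow]
  show (Matrix.scalar (Fin 3)) ((ωu ^ j : ℂˣ) : ℂ) = _
  rw [Units.val_zpow_eq_zpow_val]
  show (Matrix.scalar (Fin 3)) (ω ^ j) = _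
  rw [Matrix.scalar_apply, Matrix.smul_one_eq_diagonal]

lemma W_commute (x : GL (Fin 3) ℂ) : Commute W x := by
  apply Units.ext
  show (W * x : GL (Fin 3) ℂ).val = (x * W : GL (Fin 3) ℂ).val
  rw [Units.val_mul, Units.val_mul]
  exact Matrix.scalar_commute ω (fun r => Commute.all _ _) x.val

-- the basic relation g₁ g₂ = ω g₂ g₁
lemma g₁_eq : g₁ = Matrix.of ![![1,0,0],![0,ω,0],![0,0,ω^2]] := by
  ext i j
  fin_cases i <;> fin_cases j <;> simp [g₁, Matrix.diagonal_apply] <;> rfl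

lemma rel_mat : g₁ * g₂ = ω • (g₂ * g₁) := by
  ext i j
  fin_cases i <;> fin_cases j <;>
    simp [g₁_eq, g₂, Matrix.mul_apply, Fin.sum_univ_three, Matrix.smul_apply, Matrix.vecHead, Matrix.vecTail] <;>
    first
      | rfl
      | ring1
      | exact ω_cube.symm
      | linear_combination ω_cube
      | linear_combination -ω_cube

lemma rel : G₁ * G₂ = W * (G₂ * G₁) := by
  apply Units.ext
  show g₁ * g₂ = (W : Matrix (Fin 3) (Fin 3) ℂ) * (g₂ * g₁)
  have : (W : Matrix (Fin 3) (Fin 3) ℂ) = ω ^ (1:ℤ) • 1 := by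
    rw [← coe_W_zpow 1, zpow_one]
  rw [this, rel_mat]; rw [zpow_one, smul_mul_assoc, one_mul]

-- G₁ * G₂^j = W^j * G₂^j * G₁
lemma lemB (j : ℤ) : G₁ * G₂ ^ j = W ^ j * G₂ ^ j * G₁ := by
  have s : SemiconjBy G₁ G₂ (W * G₂) := by
    unfold SemiconjBy; rw [rel, mul_assoc]
  have := s.zpow_right j
  unfold SemiconjBy at this
  rw [this, (W_commute G₂).mul_zpow]

-- G₂ * G₁^j = W^(-j) * G₁^j * G₂
lemma lemC (j : ℤ) : G₂ * G₁ ^ j = W ^ (-j) * G₁ ^ j * G₂ := by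
  have s : SemiconjBy G₂ G₁ (W⁻¹ * G₁) := by
    unfold SemiconjBy
    rw [mul_assoc, rel, inv_mul_cancel_left]
  have := s.zpow_right j
  unfold SemiconjBy at this
  rw [this, (W_commute G₁).inv_left.mul_zpow, _root_.inv_zpow, ← _root_.zpow_neg]

lemma comm_W (j : ℤ) (x : GL (Fin 3) ℂ) : x * W ^ j = W ^ j * x :=
  (((W_commute x).zpow_left j).eq).symm


/-- The kernel of χ is D·Γ: if n g₁ n⁻¹ = ω^k g₁ and n g₂ n⁻¹ = ω^l g₂ then
n = z·g for a nonzero scalar z and g ∈ Γ; indeed one may take g = g₁^l g₂^{−k}. -/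
theorem chi_kernel :
    ∀ (n : GL (Fin 3) ℂ) (k l : ℤ),
      ((n * G₁ * n⁻¹ : GL (Fin 3) ℂ) : Matrix (Fin 3) (Fin 3) ℂ) =
        ω ^ k • ((G₁ : GL (Fin 3) ℂ) : Matrix (Fin 3) (Fin 3) ℂ) →
      ((n * G₂ * n⁻¹ : GL (Fin 3) ℂ) : Matrix (Fin 3) (Fin 3) ℂ) =
        ω ^ l • ((G₂ : GL (Fin 3) ℂ) : Matrix (Fin 3) (Fin 3) ℂ) →
      ∃ z : ℂ, z ≠ 0 ∧ (G₁ ^ l * G₂ ^ (-k) : GL (Fin 3) ℂ) ∈ Γ ∧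
        ((n : GL (Fin 3) ℂ) : Matrix (Fin 3) (Fin 3) ℂ) =
          z • ((G₁ ^ l * G₂ ^ (-k) : GL (Fin 3) ℂ) : Matrix (Fin 3) (Fin 3) ℂ) := by
  intro n k l h1 h2
  -- move the hypotheses to the level of GL
  have H1 : n * G₁ * n⁻¹ = W ^ k * G₁ := by
    apply Units.ext
    show ((n * G₁ * n⁻¹ : GL (Fin 3) ℂ) : Matrix (Fin 3) (Fin 3) ℂ) = _
    rw [h1, Units.val_mul, coe_W_zpow, smul_mul_assoc, one_mul]
  have H2 : n * G₂ * n⁻¹ = W ^ l * G₂ := by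
    apply Units.ext
    show ((n * G₂ * n⁻¹ : GL (Fin 3) ℂ) : Matrix (Fin 3) (Fin 3) ℂ) = _
    rw [h2, Units.val_mul, coe_W_zpow, smul_mul_assoc, one_mul]
  have hn1 : n * G₁ = W ^ k * G₁ * n := mul_inv_eq_iff_eq_mul.mp H1
  have hn2 : n * G₂ = W ^ l * G₂ * n := mul_inv_eq_iff_eq_mul.mp H2
  set M : GL (Fin 3) ℂ := G₁ ^ l * G₂ ^ (-k) with hM
  have e1 : M⁻¹ = G₂ ^ k * G₁ ^ (-l) := by
    rw [hM, _root_.mul_inv_rev, ← _root_.zpow_neg, ← _root_.zpow_neg, neg_neg]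
  set m : GL (Fin 3) ℂ := M⁻¹ * n with hm
  -- key semiconjugation identities
  have S1 : M⁻¹ * (W ^ k * G₁) = G₁ * M⁻¹ := by
    rw [e1]
    calc G₂ ^ k * G₁ ^ (-l) * (W ^ k * G₁)
        = G₂ ^ k * (G₁ ^ (-l) * W ^ k) * G₁ := by group
      _ = G₂ ^ k * (W ^ k * G₁ ^ (-l)) * G₁ := by rw [comm_W]
      _ = G₂ ^ k * W ^ k * (G₁ ^ (-l) * G₁) := by group
      _ = W ^ k * G₂ ^ k * (G₁ ^ (-l) * G₁) := by rw [comm_W]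
      _ = W ^ k * G₂ ^ k * G₁ * G₁ ^ (-l) := by group
      _ = G₁ * G₂ ^ k * G₁ ^ (-l) := by rw [← lemB]
      _ = G₁ * (G₂ ^ k * G₁ ^ (-l)) := by group
  have S2 : M⁻¹ * (W ^ l * G₂) = G₂ * M⁻¹ := by
    rw [e1]
    calc G₂ ^ k * G₁ ^ (-l) * (W ^ l * G₂)
        = G₂ ^ k * (G₁ ^ (-l) * W ^ l) * G₂ := by group
      _ = G₂ ^ k * (W ^ l * G₁ ^ (-l)) * G₂ := by rw [comm_W]
      _ = G₂ ^ k * (W ^ l * G₁ ^ (-l) * G₂) := by group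
      _ = G₂ ^ k * (W ^ (-(-l)) * G₁ ^ (-l) * G₂) := by rw [neg_neg]
      _ = G₂ ^ k * (G₂ * G₁ ^ (-l)) := by rw [← lemC]
      _ = G₂ * (G₂ ^ k * G₁ ^ (-l)) := by group
  -- m commutes with G₁ and G₂
  have hc1 : m * G₁ = G₁ * m := by
    rw [hm, mul_assoc, hn1]
    calc M⁻¹ * (W ^ k * G₁ * n) = (M⁻¹ * (W ^ k * G₁)) * n := by group
      _ = (G₁ * M⁻¹) * n := by rw [S1]
      _ = G₁ * (M⁻¹ * n) := by group
  have hc2 : m * G₂ = G₂ * m := by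
    rw [hm, mul_assoc, hn2]
    calc M⁻¹ * (W ^ l * G₂ * n) = (M⁻¹ * (W ^ l * G₂)) * n := by group
      _ = (G₂ * M⁻¹) * n := by rw [S2]
      _ = G₂ * (M⁻¹ * n) := by group
  -- pass to matrices
  set A : Matrix (Fin 3) (Fin 3) ℂ := (m : Matrix (Fin 3) (Fin 3) ℂ) with hA
  have hm1 : A * g₁ = g₁ * A := by
    have := congrArg Units.val hc1
    rwa [Units.val_mul, Units.val_mul] at this
  have hm2 : A * g₂ = g₂ * A := by
    have := congrArg Units.val hc2
    rwa [Units.val_mul, Units.val_mul] at this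
  -- entrywise consequences
  have entry1 : ∀ i j : Fin 3, (A * g₁) i j = (g₁ * A) i j := fun i j => by rw [hm1]
  have entry2 : ∀ i j : Fin 3, (A * g₂) i j = (g₂ * A) i j := fun i j => by rw [hm2]
  have hωsub : ω - 1 ≠ 0 := sub_ne_zero.mpr ω_ne_one
  have hωsub2 : ω ^ 2 - 1 ≠ 0 := sub_ne_zero.mpr ω_sq_ne_one
  have hωsub3 : ω ^ 2 - ω ≠ 0 := sub_ne_zero.mpr ω_sq_ne_ω
  have z01 : A 0 1 = 0 := by
    have h := entry1 0 1
    simp [g₁_eq, Matrix.mul_apply, Fin.sum_univ_three, Matrix.vecHead, Matrix.vecTail] at h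
    have : A 0 1 * (ω - 1) = 0 := by linear_combination h
    exact (mul_eq_zero.mp this).resolve_right hωsub
  have z02 : A 0 2 = 0 := by
    have h := entry1 0 2
    simp [g₁_eq, Matrix.mul_apply, Fin.sum_univ_three, Matrix.vecHead, Matrix.vecTail] at h
    have : A 0 2 * (ω ^ 2 - 1) = 0 := by linear_combination h
    exact (mul_eq_zero.mp this).resolve_right hωsub2
  have z10 : A 1 0 = 0 := by
    have h := entry1 1 0
    simp [g₁_eq, Matrix.mul_apply, Fin.sum_univ_three, Matrix.vecHead, Matrix.vecTail] at h
    have : A 1 0 * (ω - 1) = 0 := by linear_combination -h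
    exact (mul_eq_zero.mp this).resolve_right hωsub
  have z12 : A 1 2 = 0 := by
    have h := entry1 1 2
    simp [g₁_eq, Matrix.mul_apply, Fin.sum_univ_three, Matrix.vecHead, Matrix.vecTail] at h
    have : A 1 2 * (ω ^ 2 - ω) = 0 := by linear_combination h
    exact (mul_eq_zero.mp this).resolve_right hωsub3
  have z20 : A 2 0 = 0 := by
    have h := entry1 2 0
    simp [g₁_eq, Matrix.mul_apply, Fin.sum_univ_three, Matrix.vecHead, Matrix.vecTail] at h
    have : A 2 0 * (ω ^ 2 - 1) = 0 := by linear_combination -h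
    exact (mul_eq_zero.mp this).resolve_right hωsub2
  have z21 : A 2 1 = 0 := by
    have h := entry1 2 1
    simp [g₁_eq, Matrix.mul_apply, Fin.sum_univ_three, Matrix.vecHead, Matrix.vecTail] at h
    have : A 2 1 * (ω ^ 2 - ω) = 0 := by linear_combination -h
    exact (mul_eq_zero.mp this).resolve_right hωsub3
  have d01 : A 0 0 = A 1 1 := by
    have h := entry2 1 0
    simpa [g₂, Matrix.mul_apply, Fin.sum_univ_three, Matrix.vecHead, Matrix.vecTail]
      using h.symm
  have d12 : A 1 1 = A 2 2 := by
    have h := entry2 2 1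
    simpa [g₂, Matrix.mul_apply, Fin.sum_univ_three, Matrix.vecHead, Matrix.vecTail]
      using h.symm
  -- A is scalar
  have hAs : A = A 0 0 • (1 : Matrix (Fin 3) (Fin 3) ℂ) := by
    ext i j
    fin_cases i <;> fin_cases j <;>
      simp [Matrix.smul_apply, Matrix.one_apply, z01, z02, z10, z12, z20, z21] <;>
      first
        | rfl
        | exact d01.symm
        | exact d01
        | exact (d01.trans d12).symm
  have hz0 : A 0 0 ≠ 0 := by
    intro h0
    have hunit : A * ((m⁻¹ : GL (Fin 3) ℂ) : Matrix (Fin 3) (Fin 3) ℂ) = 1 := by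
      rw [hA, ← Units.val_mul, mul_inv_cancel, Units.val_one]
    rw [hAs, h0, zero_smul, zero_mul] at hunit
    have h00 := congrArg (fun B => B 0 0) hunit
    simp [Matrix.one_apply] at h00
  refine ⟨A 0 0, hz0, ?_, ?_⟩
  · have hG1 : G₁ ∈ Γ := Subgroup.subset_closure (Set.mem_insert _ _)
    have hG2 : G₂ ∈ Γ := Subgroup.subset_closure (Set.mem_insert_of_mem _ rfl)
    exact Subgroup.mul_mem _ (Subgroup.zpow_mem _ hG1 l) (Subgroup.zpow_mem _ hG2 (-k))
  · have hn : n = M * m := by rw [hm, ← mul_assoc, mul_inv_cancel, one_mul]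
    calc (n : Matrix (Fin 3) (Fin 3) ℂ)
        = (M : Matrix (Fin 3) (Fin 3) ℂ) * A := by rw [hn, Units.val_mul, hA]
      _ = (M : Matrix (Fin 3) (Fin 3) ℂ) * (A 0 0 • 1) := by rw [← hAs]
      _ = A 0 0 • ((M : Matrix (Fin 3) (Fin 3) ℂ) * 1) := by rw [mul_smul_comm]
      _ = A 0 0 • (M : Matrix (Fin 3) (Fin 3) ℂ) := by rw [mul_one]
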